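/- Let (P_n) be strongly invariant for the system (A). The pair (A,P) is polynomially dichotomic (i.e., (h,k)-dichotomic for the rates h_m = (m+1)^α, k_m = (m+1)^β for some α, β > 0) if and only if there exist a sequence of norms 𝒩 = {|||·|||_n : n ∈ ℕ} compatible with (P_n), real constants α, β > 0 and a nondecreasing sequence s : ℕ → [1,∞) such that (m+1)^α|||A_m^n P_n x|||_m ≤ s_n (n+1)^α|||x|||_n and (m+1)^β|||B_m^n Q_m x|||_n ≤ s_m (n+1)^β|||x|||_m for all m ≥ n and all x ∈ X. -/

import Mathlib

open ContinuousLinearMap Filter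

noncomputable section

variable {X : Type*} [NormedAddCommGroup X] [NormedSpace ℝ X]

/-- The evolution operator `A_m^n` associated to the linear difference system
`x_{n+1} = A_n x_n`: `A_m^n = A_{m-1} ⋯ A_n` for `m > n` and `A_n^n = I`. -/
def evol (A : ℕ → X →L[ℝ] X) : ℕ → ℕ → X →L[ℝ] X
  | 0, _ => 1
  | m + 1, n => if m + 1 ≤ n then 1 else A m ∘L evol A m n

/-- `P` is a projectors sequence. -/
def ProjSeq (P : ℕ → X →L[ℝ] X) : Prop := ∀ n, P n ∘L P n = P n

/-- The projectors sequence `P` is invariant for the system `(A)`. -/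
def InvariantFor (A P : ℕ → X →L[ℝ] X) : Prop := ∀ n, A n ∘L P n = P (n + 1) ∘L A n

/-- The projectors sequence `P` is strongly invariant for the system `(A)`: it is invariant and
the restriction of `A_m^n` to `Ker P_n` is an isomorphism from `Ker P_n` onto `Ker P_m`. -/
def StronglyInvariantFor (A P : ℕ → X →L[ℝ] X) : Prop :=
  InvariantFor A P ∧ ∀ m n : ℕ, n ≤ m →
    Set.BijOn (evol A m n) (LinearMap.ker (P n : X →ₗ[ℝ] X) : Set X) (LinearMap.ker (P m : X →ₗ[ℝ] X))

/-- A growth rate: an increasing sequence with values in `[1, ∞)` tending to `∞`. -/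
def IsGrowthRate (h : ℕ → ℝ) : Prop :=
  StrictMono h ∧ (∀ n, 1 ≤ h n) ∧ Tendsto h atTop atTop

/-- The pair `(A, P)` is `(h,k)`-dichotomic. -/
def Dichotomic (A P : ℕ → X →L[ℝ] X) (h k : ℕ → ℝ) : Prop :=
  ∃ d : ℕ → ℝ, (∀ n, 1 ≤ d n) ∧ Monotone d ∧
    ∀ m n : ℕ, n ≤ m → ∀ x : X,
      h m * ‖evol A m n (P n x)‖ ≤ d n * (h n * ‖P n x‖) ∧
      k m * ‖(1 - P n) x‖ ≤ d m * (k n * ‖evol A m n ((1 - P n) x)‖)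

/-- The pair `(A, P)` is uniformly `(h,k)`-dichotomic. -/
def UniformDichotomic (A P : ℕ → X →L[ℝ] X) (h k : ℕ → ℝ) : Prop :=
  ∃ d : ℝ, 1 ≤ d ∧
    ∀ m n : ℕ, n ≤ m → ∀ x : X,
      h m * ‖evol A m n (P n x)‖ ≤ d * (h n * ‖P n x‖) ∧
      k m * ‖(1 - P n) x‖ ≤ d * (k n * ‖evol A m n ((1 - P n) x)‖)

/-- The pair `(A, P)` has `(h,k)`-growth. -/
def HasGrowth (A P : ℕ → X →L[ℝ] X) (h k : ℕ → ℝ) : Prop :=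
  ∃ g : ℕ → ℝ, (∀ n, 1 ≤ g n) ∧ Monotone g ∧
    ∀ m n : ℕ, n ≤ m → ∀ x : X,
      h n * ‖evol A m n (P n x)‖ ≤ g n * (h m * ‖P n x‖) ∧
      k n * ‖(1 - P n) x‖ ≤ g m * (k m * ‖evol A m n ((1 - P n) x)‖)

/-- `N` is a sequence of norms on `X`. -/
def IsNormSeq (N : ℕ → X → ℝ) : Prop :=
  ∀ n, (∀ x y, N n (x + y) ≤ N n x + N n y) ∧
    (∀ (a : ℝ) (x : X), N n (a • x) = |a| * N n x) ∧
    (∀ x, N n x = 0 ↔ x = 0)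

/-- The sequence of norms `N` is compatible with the projectors sequence `P`. -/
def NormsCompatible (N : ℕ → X → ℝ) (P : ℕ → X →L[ℝ] X) : Prop :=
  IsNormSeq N ∧ ∃ c : ℕ → ℝ, (∀ n, 1 ≤ c n) ∧ Monotone c ∧
    ∀ (n : ℕ) (x : X), ‖x‖ ≤ N n x ∧ N n x ≤ c n * (‖P n x‖ + ‖(1 - P n) x‖)

/-- The defining properties of the skew-evolution operator `B` associated to the pair `(A, P)`:
`A_m^n B_m^n Q_m = Q_m`, `B_m^n A_m^n Q_n = Q_n` and `B_m^n Q_m = Q_n B_m^n Q_m` for `m ≥ n`,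
where `Q_n = I - P_n`. -/
def SkewEvol (A P : ℕ → X →L[ℝ] X) (B : ℕ → ℕ → X →L[ℝ] X) : Prop :=
  ∀ m n : ℕ, n ≤ m →
    evol A m n ∘L (B m n ∘L (1 - P m)) = 1 - P m ∧
    B m n ∘L (evol A m n ∘L (1 - P n)) = 1 - P n ∧
    B m n ∘L (1 - P m) = (1 - P n) ∘L (B m n ∘L (1 - P m))


lemma mono_maj (t : ℕ → ℝ) : ∃ s : ℕ → ℝ, (∀ n, 1 ≤ s n) ∧ Monotone s ∧ ∀ n, t n ≤ s n := by
  refine ⟨fun n => (Finset.range (n+1)).sup' ⟨n, Finset.self_mem_range_succ n⟩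
    (fun k => max 1 (t k)), ?_, ?_, ?_⟩
  · intro n
    exact le_trans (le_max_left _ _)
      (Finset.le_sup' (fun k => max 1 (t k)) (Finset.self_mem_range_succ n))
  · intro a b hab
    dsimp only
    apply Finset.sup'_le
    intro k hk
    simp only [Finset.mem_range] at hk
    exact Finset.le_sup' (fun k => max 1 (t k)) (Finset.mem_range.mpr (by omega))
  · intro n
    exact le_trans (le_max_right _ _)
      (Finset.le_sup' (fun k => max 1 (t k)) (Finset.self_mem_range_succ n))

lemma evol_self (A : ℕ → X →L[ℝ] X) (n : ℕ) : evol A n n = 1 := by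
  cases n with
  | zero => rfl
  | succ m => simp [evol]

lemma evol_succ (A : ℕ → X →L[ℝ] X) {m n : ℕ} (h : n ≤ m) :
    evol A (m+1) n = A m ∘L evol A m n := by
  have h' : ¬ (m + 1 ≤ n) := by omega
  simp [evol, h']

lemma evol_comp_proj {A P : ℕ → X →L[ℝ] X} (hI : InvariantFor A P) {m n : ℕ} (h : n ≤ m) :
    evol A m n ∘L P n = P m ∘L evol A m n := by
  induction m, h using Nat.le_induction with
  | base => rw [evol_self]; ext x; simp
  | succ m hm ih =>
      rw [evol_succ A hm, ContinuousLinearMap.comp_assoc, ih,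
        ← ContinuousLinearMap.comp_assoc, hI m, ContinuousLinearMap.comp_assoc]

theorem stmt_15 [CompleteSpace X] (A P : ℕ → X →L[ℝ] X) (B : ℕ → ℕ → X →L[ℝ] X)
    (hP : ProjSeq P) (hSI : StronglyInvariantFor A P) (hB : SkewEvol A P B) :
    (∃ α β : ℝ, 0 < α ∧ 0 < β ∧
      Dichotomic A P (fun m => ((m : ℝ) + 1) ^ α) (fun m => ((m : ℝ) + 1) ^ β)) ↔
      ∃ N : ℕ → X → ℝ, NormsCompatible N P ∧ ∃ α β : ℝ, 0 < α ∧ 0 < β ∧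
        ∃ s : ℕ → ℝ, (∀ n, 1 ≤ s n) ∧ Monotone s ∧
          ∀ m n : ℕ, n ≤ m → ∀ x : X,
            ((m : ℝ) + 1) ^ α * N m (evol A m n (P n x)) ≤
              s n * (((n : ℝ) + 1) ^ α * N n x) ∧
            ((m : ℝ) + 1) ^ β * N n (B m n ((1 - P m) x)) ≤
              s m * (((n : ℝ) + 1) ^ β * N m x) := by
  obtain ⟨hI, -⟩ := hSI
  constructor
  · rintro ⟨α, β, hα, hβ, d, hd1, hdmono, hdich⟩
    obtain ⟨s, hs1, hsmono, hsge⟩ := mono_maj (fun n => d n * (1 + ‖P n‖ + ‖1 - P n‖))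
    refine ⟨fun _ x => ‖x‖, ⟨fun n => ⟨norm_add_le, fun a x => norm_smul a x, fun x => norm_eq_zero⟩,
      fun _ => 1, fun _ => le_refl 1, monotone_const, fun n x => ⟨le_refl _, ?_⟩⟩,
      α, β, hα, hβ, s, hs1, hsmono, fun m n hmn x => ⟨?_, ?_⟩⟩
    · have hx : x = P n x + (1 - P n) x := by simp
      calc ‖x‖ = ‖P n x + (1 - P n) x‖ := by rw [← hx]
        _ ≤ ‖P n x‖ + ‖(1 - P n) x‖ := norm_add_le _ _
        _ = 1 * (‖P n x‖ + ‖(1 - P n) x‖) := by ring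
    · -- first inequality
      have h1 := (hdich m n hmn x).1
      have hPx : ‖P n x‖ ≤ ‖P n‖ * ‖x‖ := (P n).le_opNorm x
      have hd0 : (0:ℝ) ≤ d n := le_trans zero_le_one (hd1 n)
      have hnn : (0:ℝ) < ((n:ℝ) + 1) ^ α := by positivity
      have hsn : d n * ‖P n‖ ≤ s n := by
        have := hsge n
        nlinarith [norm_nonneg (P n), norm_nonneg (1 - P n)]
      calc ((m:ℝ) + 1) ^ α * ‖evol A m n (P n x)‖
          ≤ d n * (((n:ℝ) + 1) ^ α * ‖P n x‖) := h1
        _ ≤ d n * (((n:ℝ) + 1) ^ α * (‖P n‖ * ‖x‖)) := by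
            apply mul_le_mul_of_nonneg_left _ hd0
            exact mul_le_mul_of_nonneg_left hPx hnn.le
        _ = (d n * ‖P n‖) * (((n:ℝ) + 1) ^ α * ‖x‖) := by ring
        _ ≤ s n * (((n:ℝ) + 1) ^ α * ‖x‖) := by
            apply mul_le_mul_of_nonneg_right hsn
            positivity
    · -- second inequality
      obtain ⟨hB1, hB2, hB3⟩ := hB m n hmn
      set y := B m n ((1 - P m) x) with hy
      have hyQ : (1 - P n) y = y := (DFunLike.congr_fun hB3 x).symm
      have hey : evol A m n y = (1 - P m) x := DFunLike.congr_fun hB1 x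
      have h2 := (hdich m n hmn y).2
      rw [hyQ, hey] at h2
      have hQx : ‖(1 - P m) x‖ ≤ ‖1 - P m‖ * ‖x‖ := (1 - P m).le_opNorm x
      have hd0 : (0:ℝ) ≤ d m := le_trans zero_le_one (hd1 m)
      have hnn : (0:ℝ) < ((n:ℝ) + 1) ^ β := by positivity
      have hsm : d m * ‖1 - P m‖ ≤ s m := by
        have := hsge m
        nlinarith [norm_nonneg (P m), norm_nonneg (1 - P m)]
      calc ((m:ℝ) + 1) ^ β * ‖y‖
          ≤ d m * (((n:ℝ) + 1) ^ β * ‖(1 - P m) x‖) := h2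
        _ ≤ d m * (((n:ℝ) + 1) ^ β * (‖1 - P m‖ * ‖x‖)) := by
            apply mul_le_mul_of_nonneg_left _ hd0
            exact mul_le_mul_of_nonneg_left hQx hnn.le
        _ = (d m * ‖1 - P m‖) * (((n:ℝ) + 1) ^ β * ‖x‖) := by ring
        _ ≤ s m * (((n:ℝ) + 1) ^ β * ‖x‖) := by
            apply mul_le_mul_of_nonneg_right hsm
            positivity
  · rintro ⟨N, ⟨hNS, c, hc1, hcmono, hcomp⟩, α, β, hα, hβ, s, hs1, hsmono, hineq⟩
    obtain ⟨d, hd1, hdmono, hdge⟩ := mono_maj (fun n => s n * c n)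
    refine ⟨α, β, hα, hβ, d, hd1, hdmono, fun m n hmn x => ⟨?_, ?_⟩⟩
    · have hPP : P n (P n x) = P n x := DFunLike.congr_fun (hP n) x
      have h1 := (hineq m n hmn (P n x)).1
      rw [hPP] at h1
      have hle1 : ‖evol A m n (P n x)‖ ≤ N m (evol A m n (P n x)) := (hcomp m _).1
      have hle2 : N n (P n x) ≤ c n * ‖P n x‖ := by
        have := (hcomp n (P n x)).2
        have hz : (1 - P n) (P n x) = 0 := by
          simp [ContinuousLinearMap.sub_apply, hPP]
        rw [hz, hPP] at this
        simpa using this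
      have hmm : (0:ℝ) < ((m:ℝ) + 1) ^ α := by positivity
      have hnn : (0:ℝ) < ((n:ℝ) + 1) ^ α := by positivity
      have hs0 : (0:ℝ) ≤ s n := le_trans zero_le_one (hs1 n)
      calc ((m:ℝ) + 1) ^ α * ‖evol A m n (P n x)‖
          ≤ ((m:ℝ) + 1) ^ α * N m (evol A m n (P n x)) :=
            mul_le_mul_of_nonneg_left hle1 hmm.le
        _ ≤ s n * (((n:ℝ) + 1) ^ α * N n (P n x)) := h1
        _ ≤ s n * (((n:ℝ) + 1) ^ α * (c n * ‖P n x‖)) := by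
            apply mul_le_mul_of_nonneg_left _ hs0
            exact mul_le_mul_of_nonneg_left hle2 hnn.le
        _ = (s n * c n) * (((n:ℝ) + 1) ^ α * ‖P n x‖) := by ring
        _ ≤ d n * (((n:ℝ) + 1) ^ α * ‖P n x‖) := by
            apply mul_le_mul_of_nonneg_right (hdge n)
            positivity
    · set y := evol A m n ((1 - P n) x) with hy
      have hPny : P n ((1 - P n) x) = 0 := by
        have hPP : P n (P n x) = P n x := DFunLike.congr_fun (hP n) x
        simp [ContinuousLinearMap.sub_apply, hPP]
      have hPmy : P m y = 0 := by
        have := DFunLike.congr_fun (evol_comp_proj hI hmn) ((1 - P n) x)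
        simp only [ContinuousLinearMap.comp_apply] at this
        rw [hPny] at this
        simpa [hy] using this.symm
      have hQy : (1 - P m) y = y := by
        simp [ContinuousLinearMap.sub_apply, hPmy]
      have hBy : B m n ((1 - P m) y) = (1 - P n) x := by
        rw [hQy]
        have := DFunLike.congr_fun (hB m n hmn).2.1 x
        simpa [hy] using this
      have h2 := (hineq m n hmn y).2
      rw [hBy] at h2
      have hle1 : ‖(1 - P n) x‖ ≤ N n ((1 - P n) x) := (hcomp n _).1
      have hle2 : N m y ≤ c m * ‖y‖ := by
        have := (hcomp m y).2
        rw [hPmy, hQy] at this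
        simpa using this
      have hmm : (0:ℝ) < ((m:ℝ) + 1) ^ β := by positivity
      have hnn : (0:ℝ) < ((n:ℝ) + 1) ^ β := by positivity
      have hs0 : (0:ℝ) ≤ s m := le_trans zero_le_one (hs1 m)
      calc ((m:ℝ) + 1) ^ β * ‖(1 - P n) x‖
          ≤ ((m:ℝ) + 1) ^ β * N n ((1 - P n) x) :=
            mul_le_mul_of_nonneg_left hle1 hmm.le
        _ ≤ s m * (((n:ℝ) + 1) ^ β * N m y) := h2
        _ ≤ s m * (((n:ℝ) + 1) ^ β * (c m * ‖y‖)) := by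
            apply mul_le_mul_of_nonneg_left _ hs0
            exact mul_le_mul_of_nonneg_left hle2 hnn.le
        _ = (s m * c m) * (((n:ℝ) + 1) ^ β * ‖y‖) := by ring
        _ ≤ d m * (((n:ℝ) + 1) ^ β * ‖y‖) := by
            apply mul_le_mul_of_nonneg_right (hdge m)
            positivity

end
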